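/- In an SP-structure satisfying Symmetry, Non-negativity, Boundedness, O-Projection, and Factorization, two states x,y satisfy p(x,z) = p(y,z) for every state z if and only if p(x,y) = 1. -/
import Mathlib


variable {Ω : Type*}

def IsOrtho (p : Ω → Ω → ℝ) (A : Set Ω) : Prop :=
  ∀ x ∈ A, ∀ y ∈ A, x ≠ y → p x y = 0

noncomputable def pSet (p : Ω → Ω → ℝ) (x : Ω) (A : Set Ω) : ℝ :=
  ∑' a : A, p x a

def Symm (p : Ω → Ω → ℝ) : Prop := ∀ x y, p x y = p y x

def Nonneg (p : Ω → Ω → ℝ) : Prop := ∀ x y, 0 ≤ p x y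

def Bounded (p : Ω → Ω → ℝ) : Prop :=
  ∀ (x : Ω) (A : Set Ω), IsOrtho p A →
    Summable (fun a : A => p x a) ∧ pSet p x A ≤ 1

def OProj (p : Ω → Ω → ℝ) : Prop :=
  ∀ (x : Ω) (A : Set Ω), IsOrtho p A → pSet p x A < 1 →
    ∃ y, pSet p y A = 0 ∧ pSet p x A + p x y = 1

def Factor (p : Ω → Ω → ℝ) : Prop :=
  ∀ (x y z : Ω) (A : Set Ω), IsOrtho p A → pSet p y A = 1 → pSet p z A = 1 →
    p x y = pSet p x A → p x z = p x y * p y z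

def Subgen (p : Ω → Ω → ℝ) (A : Set Ω) : Set Ω := {x | pSet p x A = 1}

def IsSubspace (p : Ω → Ω → ℝ) (X : Set Ω) : Prop :=
  ∃ A, IsOrtho p A ∧ X = Subgen p A

def Standard (p : Ω → Ω → ℝ) : Prop := ∀ x y, p x y = 1 → x = y

lemma ortho_singleton (p : Ω → Ω → ℝ) (a : Ω) : IsOrtho p {a} := by
  intro u hu v hv hne
  simp only [Set.mem_singleton_iff] at hu hv
  exact absurd (hu.trans hv.symm) hne

lemma pSet_singleton (p : Ω → Ω → ℝ) (x a : Ω) : pSet p x {a} = p x a := by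
  simp [pSet, tsum_singleton]

lemma p_self (p : Ω → Ω → ℝ) (h1 : Symm p) (h3 : Bounded p) (h4 : OProj p) (x : Ω) :
    p x x = 1 := by
  have ho := ortho_singleton p x
  have hle := (h3 x {x} ho).2
  rw [pSet_singleton] at hle
  rcases lt_or_eq_of_le hle with hlt | heq
  · exfalso
    obtain ⟨w, hw0, hw1⟩ := h4 x {x} ho (by rwa [pSet_singleton])
    rw [pSet_singleton] at hw0 hw1
    rw [h1 x w, hw0, add_zero] at hw1
    exact absurd hw1 (ne_of_lt hlt)
  · exact heq

theorem stmt9 (p : Ω → Ω → ℝ) (h1 : Symm p) (h2 : Nonneg p) (h3 : Bounded p)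
    (h4 : OProj p) (h5 : Factor p) (x y : Ω) :
    (∀ z : Ω, p x z = p y z) ↔ p x y = 1 := by
  constructor
  · intro h
    have := h y
    rwa [p_self p h1 h3 h4] at this
  · intro hxy z
    have hA := ortho_singleton p y
    have h1' : pSet p x {y} = 1 := by rwa [pSet_singleton]
    have h2' : pSet p y {y} = 1 := by rw [pSet_singleton]; exact p_self p h1 h3 h4 y
    have hf := h5 z y x {y} hA h2' h1' (by rw [pSet_singleton])
    rw [h1 x z, h1 y z, hf, h1 y x, hxy, mul_one]
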